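/- Let K and r be integers with 1 ≤ r ≤ K. Consider the following random process (as a composition/bind of PMFs) on subsets of Fin (K+1), where the new node is the last index K: draw N uniformly from the r-element subsets of Fin (K+1) that do not contain the new node K; then draw x uniformly from all of Fin (K+1); if x ∈ N, output (N \ {x}) ∪ {K}, and otherwise output N. Then the output distribution is exactly the uniform distribution on all r-element subsets of Fin (K+1); in particular, every r-element subset of Fin (K+1) has probability 1/C(K+1, r). -/

import Mathlib

/-- On `Fin (K+1)` with the new node being the last index `K`:
draw `N` uniformly among the `r`-element subsets not containing the new node, then
draw `x` uniformly from `Fin (K+1)`; if `x ∈ N` output `(N \ {x}) ∪ {K}`, else output `N`.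
The resulting distribution is the uniform distribution on all `r`-element subsets of
`Fin (K+1)`; in particular each such subset has probability `1 / C(K+1, r)`. -/
theorem stmt7 (K r : ℕ) (hr : 1 ≤ r) (hrK : r ≤ K) :
    (PMF.uniformOfFinset
        (Finset.powersetCard r ((Finset.univ : Finset (Fin (K + 1))).erase (Fin.last K)))
        ((Finset.powersetCard_nonempty).mpr
          (by simp [Finset.card_erase_of_mem]; omega))).bind
      (fun N =>
        (PMF.uniformOfFinset (Finset.univ : Finset (Fin (K + 1)))
            Finset.univ_nonempty).map
          (fun x => if x ∈ N then insert (Fin.last K) (N.erase x) else N))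
    = PMF.uniformOfFinset (Finset.powersetCard r (Finset.univ : Finset (Fin (K + 1))))
        ((Finset.powersetCard_nonempty).mpr (by simp; omega))
    ∧ ∀ S ∈ Finset.powersetCard r (Finset.univ : Finset (Fin (K + 1))),
        PMF.uniformOfFinset (Finset.powersetCard r (Finset.univ : Finset (Fin (K + 1))))
          ((Finset.powersetCard_nonempty).mpr (by simp; omega)) S
          = 1 / (Nat.choose (K + 1) r : ENNReal) := by
  set P : Finset (Finset (Fin (K + 1))) :=
    Finset.powersetCard r ((Finset.univ : Finset (Fin (K + 1))).erase (Fin.last K)) with hP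
  have hmemP : ∀ N : Finset (Fin (K + 1)), N ∈ P ↔ Fin.last K ∉ N ∧ N.card = r := by
    intro N
    rw [hP, Finset.mem_powersetCard]
    constructor
    · rintro ⟨hsub, hcard⟩
      refine ⟨fun hlast => ?_, hcard⟩
      exact (Finset.mem_erase.mp (hsub hlast)).1 rfl
    · rintro ⟨hlast, hcard⟩
      exact ⟨fun y hy => Finset.mem_erase.mpr ⟨fun h => hlast (h ▸ hy), Finset.mem_univ y⟩, hcard⟩
  have hcardP : P.card = Nat.choose K r := by
    rw [hP, Finset.card_powersetCard, Finset.card_erase_of_mem (Finset.mem_univ _),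
      Finset.card_univ, Fintype.card_fin]
    simp
  have hcardU : (Finset.powersetCard r (Finset.univ : Finset (Fin (K + 1)))).card
      = Nat.choose (K + 1) r := by
    rw [Finset.card_powersetCard, Finset.card_univ, Fintype.card_fin]
  -- card lemma: outputs always have card r when N ∈ P
  have hfcard : ∀ N : Finset (Fin (K + 1)), N ∈ P → ∀ x : Fin (K + 1),
      (if x ∈ N then insert (Fin.last K) (N.erase x) else N).card = r := by
    intro N hN x
    obtain ⟨hlast, hcard⟩ := (hmemP N).mp hN
    by_cases hx : x ∈ N
    · rw [if_pos hx, Finset.card_insert_of_notMem (fun h => hlast (Finset.mem_of_mem_erase h)),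
        Finset.card_erase_of_mem hx, hcard]
      omega
    · rw [if_neg hx, hcard]
  have key : ∀ S : Finset (Fin (K + 1)),
      (PMF.uniformOfFinset P ((Finset.powersetCard_nonempty).mpr
          (by simp [Finset.card_erase_of_mem]; omega))).bind
        (fun N =>
          (PMF.uniformOfFinset (Finset.univ : Finset (Fin (K + 1)))
              Finset.univ_nonempty).map
            (fun x => if x ∈ N then insert (Fin.last K) (N.erase x) else N)) S
      = if S.card = r then ((Nat.choose (K + 1) r : ENNReal))⁻¹ else 0 := by
    intro S
    rw [PMF.bind_apply, tsum_fintype]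
    simp only [PMF.map_apply, PMF.uniformOfFinset_apply, Finset.mem_univ, if_true,
      Finset.card_univ, Fintype.card_fin, tsum_fintype]
    by_cases hS : S.card = r
    · rw [if_pos hS]
      -- rewrite each term: mul_sum
      have step : ∀ N : Finset (Fin (K + 1)),
          (if N ∈ P then ((P.card : ENNReal))⁻¹ else 0) *
            (∑ x : Fin (K + 1), if S = (if x ∈ N then insert (Fin.last K) (N.erase x) else N)
              then ((K + 1 : ℕ) : ENNReal)⁻¹ else 0)
          = ∑ x : Fin (K + 1),
              (if N ∈ P ∧ S = (if x ∈ N then insert (Fin.last K) (N.erase x) else N)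
                then ((Nat.choose K r : ENNReal))⁻¹ * ((K + 1 : ℕ) : ENNReal)⁻¹ else 0) := by
        intro N
        rw [Finset.mul_sum]
        refine Finset.sum_congr rfl fun x _ => ?_
        by_cases hN : N ∈ P
        · by_cases hfx : S = (if x ∈ N then insert (Fin.last K) (N.erase x) else N)
          · simp [hN, hfx, hcardP]
          · simp [hN, hfx]
        · simp [hN]
      calc _
          = ∑ x : Fin (K + 1), ∑ N : Finset (Fin (K + 1)),
              (if N ∈ P ∧ S = (if x ∈ N then insert (Fin.last K) (N.erase x) else N)
                then ((Nat.choose K r : ENNReal))⁻¹ * ((K + 1 : ℕ) : ENNReal)⁻¹ else 0) := by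
            refine Eq.trans (Finset.sum_congr rfl fun N _ => ?_) Finset.sum_comm
            convert step N using 2
            all_goals congr!
        _ = ∑ x : Fin (K + 1), (if x ∉ S then
              ((Nat.choose K r : ENNReal))⁻¹ * ((K + 1 : ℕ) : ENNReal)⁻¹ else 0) := by
            refine Finset.sum_congr rfl fun x _ => ?_
            by_cases hxS : x ∈ S
            · rw [if_neg (by simpa using hxS)]
              refine Finset.sum_eq_zero fun N _ => ?_
              rw [if_neg]
              rintro ⟨hN, hfx⟩
              obtain ⟨hlast, hcard⟩ := (hmemP N).mp hN
              by_cases hxN : x ∈ N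
              · rw [if_pos hxN] at hfx
                rw [hfx] at hxS
                rcases Finset.mem_insert.mp hxS with h | h
                · exact hlast (h ▸ hxN)
                · exact (Finset.notMem_erase x N) h
              · rw [if_neg hxN] at hfx
                exact hxN (hfx ▸ hxS)
            · rw [if_pos (by simpa using hxS)]
              -- unique N₀
              set N₀ : Finset (Fin (K + 1)) :=
                if Fin.last K ∈ S then insert x (S.erase (Fin.last K)) else S with hN₀def
              have hxlast : x ≠ Fin.last K ∨ Fin.last K ∉ S := by
                by_cases h : Fin.last K ∈ S
                · exact Or.inl (fun hh => hxS (hh ▸ h))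
                · exact Or.inr h
              rw [Finset.sum_eq_single N₀]
              · rw [if_pos]
                by_cases hl : Fin.last K ∈ S
                · have hxne : x ≠ Fin.last K := fun hh => hxS (hh ▸ hl)
                  have hxe : x ∉ S.erase (Fin.last K) := fun h => hxS (Finset.mem_of_mem_erase h)
                  have hN₀ : N₀ = insert x (S.erase (Fin.last K)) := by rw [hN₀def, if_pos hl]
                  constructor
                  · rw [hmemP, hN₀]
                    constructor
                    · intro h
                      rcases Finset.mem_insert.mp h with h | h
                      · exact hxne h.symm
                      · exact (Finset.notMem_erase _ _) h
                    · rw [Finset.card_insert_of_notMem hxe,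
                        Finset.card_erase_of_mem hl, hS]
                      omega
                  · have hxmem : x ∈ N₀ := by rw [hN₀]; exact Finset.mem_insert_self _ _
                    rw [if_pos hxmem, hN₀, Finset.erase_insert hxe,
                      Finset.insert_erase hl]
                · have hN₀ : N₀ = S := by rw [hN₀def, if_neg hl]
                  have hxN : x ∉ N₀ := by rw [hN₀]; exact hxS
                  rw [if_neg hxN, hN₀]
                  exact ⟨(hmemP S).mpr ⟨hl, hS⟩, rfl⟩
              · intro N _ hNne
                rw [if_neg]
                rintro ⟨hN, hfx⟩
                obtain ⟨hlastN, hcard⟩ := (hmemP N).mp hN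
                apply hNne
                by_cases hxN : x ∈ N
                · rw [if_pos hxN] at hfx
                  have hl : Fin.last K ∈ S := by rw [hfx]; exact Finset.mem_insert_self _ _
                  have herase : S.erase (Fin.last K) = N.erase x := by
                    rw [hfx, Finset.erase_insert (fun h => hlastN (Finset.mem_of_mem_erase h))]
                  rw [hN₀def, if_pos hl, herase, Finset.insert_erase hxN]
                · rw [if_neg hxN] at hfx
                  have hl : Fin.last K ∉ S := hfx ▸ hlastN
                  rw [hN₀def, if_neg hl, hfx]
              · intro h
                exact absurd (Finset.mem_univ N₀) h
        _ = (((Finset.univ : Finset (Fin (K + 1))).filter (fun x => x ∉ S)).card : ENNReal) *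
              (((Nat.choose K r : ENNReal))⁻¹ * ((K + 1 : ℕ) : ENNReal)⁻¹) := by
            rw [← Finset.sum_filter, Finset.sum_const, nsmul_eq_mul]
        _ = ((K + 1 - r : ℕ) : ENNReal) *
              (((Nat.choose K r : ENNReal))⁻¹ * ((K + 1 : ℕ) : ENNReal)⁻¹) := by
            congr 2
            have hcompl : (Finset.filter (fun x => x ∉ S) Finset.univ) = Sᶜ := by
              ext y; simp
            rw [hcompl, Finset.card_compl, Fintype.card_fin, hS]
        _ = ((Nat.choose (K + 1) r : ENNReal))⁻¹ := by
            have hnat : Nat.choose K r * (K + 1) = Nat.choose (K + 1) r * (K + 1 - r) :=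
              Nat.choose_mul_succ_eq K r
            have hne1 : ((K + 1 - r : ℕ) : ENNReal) ≠ 0 :=
              Nat.cast_ne_zero.mpr (by omega)
            have hne2 : ((K + 1 - r : ℕ) : ENNReal) ≠ ⊤ := ENNReal.natCast_ne_top _
            rw [← ENNReal.mul_inv (Or.inl (Nat.cast_ne_zero.mpr (Nat.choose_pos (by omega)).ne')) (by left; exact ENNReal.natCast_ne_top _)]
            rw [← Nat.cast_mul, hnat, Nat.cast_mul, ENNReal.mul_inv (Or.inl (Nat.cast_ne_zero.mpr (Nat.choose_pos (by omega)).ne')) (by left; exact ENNReal.natCast_ne_top _)]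
            rw [mul_comm ((Nat.choose (K+1) r : ENNReal))⁻¹, ← mul_assoc,
              ENNReal.mul_inv_cancel hne1 hne2, one_mul]
    · rw [if_neg hS]
      refine Finset.sum_eq_zero fun N _ => ?_
      by_cases hN : N ∈ P
      · rw [if_pos hN]
        have : (∑ x : Fin (K + 1), if S = (if x ∈ N then insert (Fin.last K) (N.erase x) else N)
            then ((K + 1 : ℕ) : ENNReal)⁻¹ else 0) = 0 := by
          refine Finset.sum_eq_zero fun x _ => ?_
          rw [if_neg]
          intro hfx
          exact hS (hfx ▸ hfcard N hN x)
        rw [mul_eq_zero]; exact Or.inr (by convert this)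
      · rw [if_neg hN, zero_mul]
  constructor
  · ext S
    rw [key S, PMF.uniformOfFinset_apply]
    by_cases hS : S.card = r
    · rw [if_pos hS, if_pos (Finset.mem_powersetCard_univ.mpr hS), hcardU]
    · rw [if_neg hS, if_neg (fun h => hS (Finset.mem_powersetCard_univ.mp h))]
  · intro S hS
    rw [PMF.uniformOfFinset_apply, if_pos hS, hcardU, one_div]
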